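/- For f ∈ C^1(ℝⁿ), x ∈ ℝⁿ and r > 0, the averaged difference quotient satisfies avg_{B(x,r)} |f(z) − f(x)|/|z − x| dz ≤ ∫_0^1 avg_{B(x,tr)} |∇f(ζ)| dζ dt. -/

import Mathlib

open MeasureTheory Metric Set

section aux

variable {n : ℕ}

local notation "E" => EuclideanSpace ℝ (Fin n)

lemma line_hasDerivAt (x z : E) (t : ℝ) :
    HasDerivAt (fun s : ℝ => x + s • (z - x)) (z - x) t := by
  have := ((hasDerivAt_id t).smul_const (z - x)).const_add x
  simpa using this

lemma ptwise_bound (f : E → ℝ) (hf : ContDiff ℝ 1 f) (x z : E) :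
    |f z - f x| / ‖z - x‖ ≤ ∫ t in (0:ℝ)..1, ‖fderiv ℝ f (x + t • (z - x))‖ := by
  have hcontline : Continuous fun t : ℝ => x + t • (z - x) :=
    continuous_const.add (continuous_id.smul continuous_const)
  have hderiv : ∀ t : ℝ, HasDerivAt (fun s : ℝ => f (x + s • (z - x)))
      (fderiv ℝ f (x + t • (z - x)) (z - x)) t := fun t =>
    ((hf.differentiable one_ne_zero (x + t • (z - x))).hasFDerivAt).comp_hasDerivAt t
      (line_hasDerivAt x z t)
  have hcontd : Continuous fun t : ℝ => fderiv ℝ f (x + t • (z - x)) (z - x) :=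
    ((hf.continuous_fderiv one_ne_zero).comp hcontline).clm_apply continuous_const
  have hcontn : Continuous fun t : ℝ => ‖fderiv ℝ f (x + t • (z - x))‖ :=
    ((hf.continuous_fderiv one_ne_zero).comp hcontline).norm
  rcases eq_or_ne z x with rfl | hzx
  · simp only [sub_self, abs_zero, norm_zero, zero_div]
    exact intervalIntegral.integral_nonneg zero_le_one fun t _ => norm_nonneg _
  · have hznx : (0:ℝ) < ‖z - x‖ := by
      rw [norm_pos_iff]; exact sub_ne_zero_of_ne hzx
    rw [div_le_iff₀ hznx]
    have hkey : f z - f x = ∫ t in (0:ℝ)..1, fderiv ℝ f (x + t • (z - x)) (z - x) := by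
      have := intervalIntegral.integral_eq_sub_of_hasDerivAt
        (f := fun s : ℝ => f (x + s • (z - x))) (fun t _ => hderiv t)
        (hcontd.intervalIntegrable 0 1)
      simpa using this.symm
    calc |f z - f x| = |∫ t in (0:ℝ)..1, fderiv ℝ f (x + t • (z - x)) (z - x)| := by
          rw [hkey]
      _ ≤ ∫ t in (0:ℝ)..1, |fderiv ℝ f (x + t • (z - x)) (z - x)| := by
          simpa [Real.norm_eq_abs] using
            intervalIntegral.norm_integral_le_integral_norm
              (f := fun t : ℝ => fderiv ℝ f (x + t • (z - x)) (z - x)) zero_le_one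
      _ ≤ ∫ t in (0:ℝ)..1, ‖fderiv ℝ f (x + t • (z - x))‖ * ‖z - x‖ := by
          apply intervalIntegral.integral_mono_on zero_le_one
            (hcontd.abs.intervalIntegrable 0 1)
            ((hcontn.mul continuous_const).intervalIntegrable 0 1)
          intro t _
          exact (fderiv ℝ f (x + t • (z - x))).le_opNorm (z - x)
      _ = (∫ t in (0:ℝ)..1, ‖fderiv ℝ f (x + t • (z - x))‖) * ‖z - x‖ := by
          rw [intervalIntegral.integral_mul_const]

end aux

/-- For `f ∈ C¹(ℝⁿ)`, `x ∈ ℝⁿ` and `r > 0`, the averaged difference quotient satisfies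
`⨍_{B(x,r)} |f z - f x| / ‖z - x‖ dz ≤ ∫_0^1 ⨍_{B(x,tr)} ‖∇f(ζ)‖ dζ dt`. -/
theorem avg_diff_quotient_le {n : ℕ} (hn : 0 < n)
    (f : EuclideanSpace ℝ (Fin n) → ℝ) (hf : ContDiff ℝ 1 f)
    (x : EuclideanSpace ℝ (Fin n)) (r : ℝ) (hr : 0 < r) :
    ⨍ z in ball x r, |f z - f x| / ‖z - x‖ ∂volume ≤
      ∫ t in (0:ℝ)..1, ⨍ ζ in ball x (t * r), ‖gradient f ζ‖ ∂volume := by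
  have hgrad : ∀ ζ, ‖gradient f ζ‖ = ‖fderiv ℝ f ζ‖ := fun ζ => by
    rw [gradient]; exact LinearIsometryEquiv.norm_map _ _
  simp only [hgrad]
  haveI : Nontrivial (EuclideanSpace ℝ (Fin n)) := by
    apply Module.finrank_pos_iff (R := ℝ).mp
    rw [finrank_euclideanSpace_fin]; exact hn
  set g : (EuclideanSpace ℝ (Fin n)) → ℝ := fun ζ => ‖fderiv ℝ f ζ‖ with hg
  have hgc : Continuous g := (hf.continuous_fderiv one_ne_zero).norm
  -- bound for g on the closed ball
  obtain ⟨M, hM⟩ : ∃ M, ∀ ζ ∈ closedBall x r, g ζ ≤ M := by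
    obtain ⟨ζ₀, _, hζ₀⟩ := (isCompact_closedBall x r).exists_isMaxOn
      ⟨x, mem_closedBall_self hr.le⟩ hgc.continuousOn
    exact ⟨g ζ₀, fun ζ hζ => hζ₀ hζ⟩
  have hM0 : 0 ≤ M := le_trans (norm_nonneg _) (hM x (mem_closedBall_self hr.le))
  set V : ℝ := (volume (ball x r)).toReal with hV
  have hV0 : 0 < V := by
    rw [hV]
    exact ENNReal.toReal_pos (measure_ball_pos volume x hr).ne' measure_ball_lt_top.ne
  set F : (EuclideanSpace ℝ (Fin n)) → ℝ → ℝ := fun z t => g (x + t • (z - x)) with hF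
  have hFc : Continuous fun p : (EuclideanSpace ℝ (Fin n)) × ℝ => F p.1 p.2 :=
    hgc.comp (continuous_const.add (continuous_snd.smul (continuous_fst.sub continuous_const)))
  have hmem : ∀ z ∈ ball x r, ∀ t ∈ Icc (0:ℝ) 1, x + t • (z - x) ∈ closedBall x r := by
    intro z hz t ht
    rw [mem_closedBall, dist_eq_norm, add_sub_cancel_left, norm_smul, Real.norm_eq_abs,
      abs_of_nonneg ht.1]
    calc t * ‖z - x‖ ≤ 1 * r := by
          apply mul_le_mul ht.2 _ (norm_nonneg _) zero_le_one
          rw [← dist_eq_norm]; exact (mem_ball.mp hz).le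
      _ = r := one_mul r
  -- finiteness instances
  haveI h1 : IsFiniteMeasure (volume.restrict (ball x r)) :=
    ⟨by rw [Measure.restrict_apply_univ]; exact measure_ball_lt_top⟩
  haveI h2 : IsFiniteMeasure (volume.restrict (Ioc (0:ℝ) 1)) :=
    ⟨by rw [Measure.restrict_apply_univ]; exact measure_Ioc_lt_top⟩
  -- product integrability
  have hFprod : Integrable (Function.uncurry F)
      ((volume.restrict (ball x r)).prod (volume.restrict (Ioc (0:ℝ) 1))) := by
    apply Integrable.mono' (integrable_const M) hFc.aestronglyMeasurable
    rw [Measure.prod_restrict]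
    rw [ae_restrict_iff' (measurableSet_ball.prod measurableSet_Ioc)]
    filter_upwards with p hp
    obtain ⟨hp1, hp2⟩ := hp
    have := hM _ (hmem p.1 hp1 p.2 ⟨hp2.1.le, hp2.2⟩)
    rwa [Real.norm_eq_abs, abs_of_nonneg (norm_nonneg _)]
  have hG_int : IntegrableOn (fun z => ∫ t in Ioc (0:ℝ) 1, F z t) (ball x r) volume :=
    hFprod.integral_prod_left
  -- pointwise bound
  have hpt : ∀ z ∈ ball x r, |f z - f x| / ‖z - x‖ ≤ ∫ t in Ioc (0:ℝ) 1, F z t := by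
    intro z _
    have := ptwise_bound f hf x z
    rwa [intervalIntegral.integral_of_le zero_le_one] at this
  -- integrability of LHS integrand
  have hbound : ∀ z ∈ ball x r, (∫ t in Ioc (0:ℝ) 1, F z t) ≤ M := by
    intro z hz
    calc ∫ t in Ioc (0:ℝ) 1, F z t ≤ ∫ _t in Ioc (0:ℝ) 1, M := by
          apply setIntegral_mono_on
          · exact (hFc.comp (Continuous.prodMk_right z)).integrableOn_Ioc
          · exact integrable_const M
          · exact measurableSet_Ioc
          · intro t ht; exact hM _ (hmem z hz t ⟨ht.1.le, ht.2⟩)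
      _ ≤ M := by
          rw [setIntegral_const, measureReal_def, Real.volume_Ioc, smul_eq_mul]
          norm_num
  have hq_int : IntegrableOn (fun z => |f z - f x| / ‖z - x‖) (ball x r) volume := by
    apply Integrable.mono' (integrable_const M)
    · exact (((hf.continuous.sub continuous_const).abs.measurable).div
        ((continuous_id.sub continuous_const).norm.measurable)).aestronglyMeasurable
    · rw [ae_restrict_iff' measurableSet_ball]
      filter_upwards with z hz
      rw [Real.norm_eq_abs, abs_of_nonneg (div_nonneg (abs_nonneg _) (norm_nonneg _))]
      exact le_trans (hpt z hz) (hbound z hz)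
  -- per-t change of variables identity
  have hkey : ∀ t ∈ Ioc (0:ℝ) 1,
      (volume (ball x (t * r))).toReal⁻¹ • ∫ ζ in ball x (t * r), g ζ ∂volume
        = V⁻¹ * ∫ z in ball x r, F z t ∂volume := by
    intro t ht
    have ht0 : 0 < t := ht.1
    -- image of ball
    have himg : (fun z : (EuclideanSpace ℝ (Fin n)) => x + t • (z - x)) '' ball x r = ball x (t * r) := by
      ext w
      simp only [mem_image, mem_ball, dist_eq_norm]
      constructor
      · rintro ⟨z, hz, rfl⟩
        rw [add_sub_cancel_left, norm_smul, Real.norm_eq_abs, abs_of_pos ht0]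
        exact (mul_lt_mul_iff_right₀ ht0).mpr hz
      · intro hw
        refine ⟨x + t⁻¹ • (w - x), ?_, ?_⟩
        · rw [add_sub_cancel_left, norm_smul, Real.norm_eq_abs, abs_of_pos (inv_pos.mpr ht0)]
          rw [inv_mul_lt_iff₀ ht0]
          exact hw
        · rw [add_sub_cancel_left, smul_smul, mul_inv_cancel₀ ht0.ne', one_smul,
            add_sub_cancel]
    have hderiv : ∀ z ∈ ball x r, HasFDerivWithinAt (fun z : (EuclideanSpace ℝ (Fin n)) => x + t • (z - x))
        (t • ContinuousLinearMap.id ℝ (EuclideanSpace ℝ (Fin n))) (ball x r) z := by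
      intro z _
      exact ((((hasFDerivAt_id z).sub_const x).const_smul t).const_add x).hasFDerivWithinAt
    have hinj : InjOn (fun z : (EuclideanSpace ℝ (Fin n)) => x + t • (z - x)) (ball x r) := by
      intro a _ b _ hab
      simp only [add_right_inj] at hab
      have := smul_right_injective (EuclideanSpace ℝ (Fin n)) ht0.ne' hab
      exact sub_left_injective this
    have hdet : |(t • ContinuousLinearMap.id ℝ (EuclideanSpace ℝ (Fin n))).det| = t ^ n := by
      rw [ContinuousLinearMap.det]
      simp only [ContinuousLinearMap.coe_smul, ContinuousLinearMap.coe_id]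
      rw [LinearMap.det_smul, LinearMap.det_id, mul_one, finrank_euclideanSpace_fin]
      exact abs_of_pos (pow_pos ht0 n)
    have hcv : ∫ ζ in ball x (t * r), g ζ ∂volume
        = t ^ n * ∫ z in ball x r, F z t ∂volume := by
      rw [← himg, integral_image_eq_integral_abs_det_fderiv_smul volume
        measurableSet_ball hderiv hinj g]
      simp only [hdet, smul_eq_mul]
      rw [integral_const_mul]
    have hVt : (volume (ball x (t * r))).toReal = t ^ n * V := by
      rw [Measure.addHaar_ball volume x (mul_pos ht0 hr).le,
        hV, Measure.addHaar_ball volume x hr.le, finrank_euclideanSpace_fin]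
      rw [ENNReal.toReal_mul, ENNReal.toReal_mul, ENNReal.toReal_ofReal (by positivity),
        ENNReal.toReal_ofReal (by positivity), mul_pow]
      ring
    rw [hcv, hVt, smul_eq_mul, mul_inv]
    have htn : (t:ℝ) ^ n ≠ 0 := (pow_pos ht0 n).ne'
    field_simp
  -- assemble
  rw [intervalIntegral.integral_of_le zero_le_one]
  calc ⨍ z in ball x r, |f z - f x| / ‖z - x‖ ∂volume
      = V⁻¹ * ∫ z in ball x r, |f z - f x| / ‖z - x‖ ∂volume := by
        rw [setAverage_eq, smul_eq_mul, hV, measureReal_def]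
    _ ≤ V⁻¹ * ∫ z in ball x r, (∫ t in Ioc (0:ℝ) 1, F z t) ∂volume := by
        apply mul_le_mul_of_nonneg_left _ (inv_nonneg.mpr hV0.le)
        exact setIntegral_mono_on hq_int hG_int measurableSet_ball hpt
    _ = V⁻¹ * ∫ t in Ioc (0:ℝ) 1, (∫ z in ball x r, F z t ∂volume) := by
        rw [integral_integral_swap hFprod]
    _ = ∫ t in Ioc (0:ℝ) 1, V⁻¹ * ∫ z in ball x r, F z t ∂volume := by
        rw [← integral_const_mul]
    _ = ∫ t in Ioc (0:ℝ) 1, ⨍ ζ in ball x (t * r), g ζ ∂volume := by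
        apply setIntegral_congr_fun measurableSet_Ioc
        intro t ht
        dsimp only
        rw [setAverage_eq]
        exact (hkey t ht).symm
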